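/- Let 𝕋² = (ℝ/ℤ)² be the flat two-dimensional torus, equipped with the quotient distance and its Haar probability measure. Let N ≥ 1 be an integer and 0 < ε < 1/2 with N π ε² ≤ 1/2. Then the measure of the hard-sphere configuration set { (x₁, …, x_N) ∈ (𝕋²)^N : |x_i − x_j| > ε for all i ≠ j } is at least (1 − N π ε²)^N; in particular, in the Boltzmann–Grad scaling N ε = 1/α this partition function is bounded below by exp(−2π/α²). -/

import Mathlib

open MeasureTheory Real

noncomputable section

/-- The flat two-dimensional torus `𝕋² = (ℝ/ℤ)²`. -/
abbrev Torus2 : Type := AddCircle (1 : ℝ) × AddCircle (1 : ℝ)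

/-- The (Euclidean) quotient distance on `𝕋²`, built from the quotient distances of the two
circle factors. -/
def torusDist (a b : Torus2) : ℝ :=
  Real.sqrt (dist a.1 b.1 ^ 2 + dist a.2 b.2 ^ 2)

section HardSphereAux
open Set

local instance : Fact ((0:ℝ) < 1) := ⟨one_pos⟩

lemma torusDist_comm (a b : Torus2) : torusDist a b = torusDist b a := by
  unfold torusDist; rw [dist_comm a.1, dist_comm a.2]

lemma torusDist_sub (x y : Torus2) : torusDist x y = torusDist (x - y) 0 := by
  unfold torusDist; simp [dist_eq_norm]

lemma continuous_torusDist2 {α : Type*} [TopologicalSpace α] {f g : α → Torus2}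
    (hf : Continuous f) (hg : Continuous g) : Continuous fun a => torusDist (f a) (g a) := by
  unfold torusDist; fun_prop

instance : (volume : Measure Torus2).IsAddRightInvariant := by
  rw [Measure.volume_eq_prod]; infer_instance

lemma volume_torus_univ : volume (Set.univ : Set Torus2) = 1 := by
  rw [Measure.volume_eq_prod, ← Set.univ_prod_univ, MeasureTheory.Measure.prod_prod,
    AddCircle.measure_univ]
  simp

lemma measurable_torus_ball (z : Torus2) (ε : ℝ) :
    MeasurableSet {x : Torus2 | torusDist x z ≤ ε} :=
  (isClosed_le (continuous_torusDist2 continuous_id continuous_const) continuous_const).measurableSet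

lemma volume_torus_ball (y : Torus2) {ε : ℝ} (hε0 : 0 ≤ ε) :
    volume {x : Torus2 | torusDist x y ≤ ε} ≤ ENNReal.ofReal (π * ε ^ 2) := by
  have htrans : {x : Torus2 | torusDist x y ≤ ε}
      = (fun x => x + (-y)) ⁻¹' {z | torusDist z 0 ≤ ε} := by
    ext x; simp only [Set.mem_setOf_eq, Set.mem_preimage]
    rw [← sub_eq_add_neg, ← torusDist_sub]
  rw [htrans, measure_preimage_add_right]
  set B : Set Torus2 := {z | torusDist z 0 ≤ ε} with hB
  have hBmeas : MeasurableSet B := measurable_torus_ball 0 ε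
  have hmp : MeasurePreserving (Prod.map ((↑) : ℝ → AddCircle (1:ℝ)) ((↑) : ℝ → AddCircle (1:ℝ)))
      ((volume.restrict (Ioc (-(1/2) : ℝ) (1/2))).prod (volume.restrict (Ioc (-(1/2) : ℝ) (1/2))))
      (volume : Measure Torus2) := by
    have h := AddCircle.measurePreserving_mk (1:ℝ) (-(1/2))
    have h2 : (-(1/2) : ℝ) + 1 = 1/2 := by norm_num
    rw [h2] at h
    rw [Measure.volume_eq_prod]
    exact h.prod h
  have key : volume B
      = ((volume.restrict (Ioc (-(1/2) : ℝ) (1/2))).prod (volume.restrict (Ioc (-(1/2) : ℝ) (1/2))))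
        (Prod.map ((↑) : ℝ → AddCircle (1:ℝ)) ((↑) : ℝ → AddCircle (1:ℝ)) ⁻¹' B) :=
    (hmp.measure_preimage hBmeas.nullMeasurableSet).symm
  rw [key, Measure.prod_restrict]
  set D : Set (ℝ × ℝ) := {p | p.1 ^ 2 + p.2 ^ 2 ≤ ε ^ 2} with hD
  have hsub : Prod.map ((↑) : ℝ → AddCircle (1:ℝ)) ((↑) : ℝ → AddCircle (1:ℝ)) ⁻¹' B
      ∩ (Ioc (-(1/2) : ℝ) (1/2) ×ˢ Ioc (-(1/2) : ℝ) (1/2)) ⊆ D := by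
    rintro ⟨s, t⟩ ⟨hmem, hst⟩
    simp only [Set.mem_preimage, hB, Set.mem_setOf_eq, Prod.map, Set.mem_prod,
      Set.mem_Ioc] at hmem hst
    have hs : |s| ≤ |(1:ℝ)| / 2 := by
      rw [abs_one, abs_le]; exact ⟨by linarith [hst.1.1], by linarith [hst.1.2]⟩
    have ht : |t| ≤ |(1:ℝ)| / 2 := by
      rw [abs_one, abs_le]; exact ⟨by linarith [hst.2.1], by linarith [hst.2.2]⟩
    have hns : ‖((s : ℝ) : AddCircle (1:ℝ))‖ = |s| :=
      (AddCircle.norm_coe_eq_abs_iff (p := (1:ℝ)) one_ne_zero).2 hs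
    have hnt : ‖((t : ℝ) : AddCircle (1:ℝ))‖ = |t| :=
      (AddCircle.norm_coe_eq_abs_iff (p := (1:ℝ)) one_ne_zero).2 ht
    unfold torusDist at hmem
    simp only [Prod.fst_zero, Prod.snd_zero, dist_zero_right] at hmem
    rw [hns, hnt] at hmem
    have hnn : (0:ℝ) ≤ |s| ^ 2 + |t| ^ 2 := by positivity
    simp only [hD, Set.mem_setOf_eq]
    calc s ^ 2 + t ^ 2 = |s| ^ 2 + |t| ^ 2 := by rw [sq_abs, sq_abs]
      _ = Real.sqrt (|s| ^ 2 + |t| ^ 2) ^ 2 := (Real.sq_sqrt hnn).symm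
      _ ≤ ε ^ 2 := pow_le_pow_left₀ (Real.sqrt_nonneg _) hmem 2
  have hDvol : (volume : Measure (ℝ × ℝ)) D = ENNReal.ofReal (π * ε ^ 2) := by
    have hDeq : D = Complex.measurableEquivRealProd.symm ⁻¹' Metric.closedBall (0:ℂ) ε := by
      ext p
      simp only [hD, Set.mem_setOf_eq, Set.mem_preimage, Metric.mem_closedBall,
        Complex.dist_eq, sub_zero, Complex.measurableEquivRealProd_symm_apply]
      rw [Complex.norm_def, Complex.normSq_mk]
      constructor
      · intro h
        have : Real.sqrt (p.1 * p.1 + p.2 * p.2) ≤ Real.sqrt (ε ^ 2) :=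
          Real.sqrt_le_sqrt (by nlinarith)
        rwa [Real.sqrt_sq hε0] at this
      · intro h
        have h2 := pow_le_pow_left₀ (Real.sqrt_nonneg _) h 2
        rw [Real.sq_sqrt (by nlinarith)] at h2
        nlinarith
    rw [hDeq,
      (Complex.volume_preserving_equiv_real_prod.symm
        Complex.measurableEquivRealProd).measure_preimage
        Metric.isClosed_closedBall.measurableSet.nullMeasurableSet,
      Complex.volume_closedBall]
    rw [ENNReal.ofReal_mul Real.pi_pos.le, ENNReal.ofReal_pow hε0, mul_comm]
    congr 1
    rw [← NNReal.coe_real_pi, ENNReal.ofReal_coe_nnreal]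
  have hpre : MeasurableSet
      (Prod.map ((↑) : ℝ → AddCircle (1:ℝ)) ((↑) : ℝ → AddCircle (1:ℝ)) ⁻¹' B) :=
    hBmeas.preimage (QuotientAddGroup.measurable_coe.prodMap QuotientAddGroup.measurable_coe)
  rw [Measure.restrict_apply hpre, ← Measure.volume_eq_prod]
  exact le_trans (measure_mono hsub) (le_of_eq hDvol)

instance (m : ℕ) : BorelSpace (Fin m → Torus2) := Pi.borelSpace

lemma measurable_config (m : ℕ) (ε : ℝ) :
    MeasurableSet {X : Fin m → Torus2 | ∀ i j : Fin m, i ≠ j → ε < torusDist (X i) (X j)} := by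
  have heq : {X : Fin m → Torus2 | ∀ i j : Fin m, i ≠ j → ε < torusDist (X i) (X j)}
      = ⋂ i, ⋂ j, {X : Fin m → Torus2 | i ≠ j → ε < torusDist (X i) (X j)} := by
    ext X; simp [Set.mem_iInter]
  rw [heq]
  refine MeasurableSet.iInter fun i => MeasurableSet.iInter fun j => ?_
  by_cases h : i = j
  · simp [h]
  · have hc : Continuous fun X : Fin m → Torus2 => torusDist (X i) (X j) :=
      continuous_torusDist2 (continuous_apply i) (continuous_apply j)
    have : {X : Fin m → Torus2 | i ≠ j → ε < torusDist (X i) (X j)}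
        = {X : Fin m → Torus2 | ε < torusDist (X i) (X j)} := by
      ext X; simp [h]
    rw [this]
    exact (isOpen_lt continuous_const hc).measurableSet

lemma cons_mem_config {n : ℕ} {ε : ℝ} (x : Torus2) (Y : Fin n → Torus2)
    (hY : ∀ i j : Fin n, i ≠ j → ε < torusDist (Y i) (Y j))
    (hx : ∀ i, ε < torusDist x (Y i)) :
    ∀ i j : Fin (n+1), i ≠ j →
      ε < torusDist (Fin.insertNth (α := fun _ => Torus2) 0 x Y i)
        (Fin.insertNth (α := fun _ => Torus2) 0 x Y j) := by
  have h0 : Fin.insertNth (α := fun _ => Torus2) (0 : Fin (n+1)) x Y 0 = x :=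
    Fin.insertNth_apply_same (α := fun _ => Torus2) 0 x Y
  have hs : ∀ j : Fin n, Fin.insertNth (α := fun _ => Torus2) (0 : Fin (n+1)) x Y j.succ = Y j := by
    intro j
    rw [← Fin.succAbove_zero]
    exact Fin.insertNth_apply_succAbove (α := fun _ => Torus2) 0 x Y j
  intro i
  refine Fin.cases ?_ ?_ i
  · intro j
    refine Fin.cases ?_ ?_ j
    · intro h; exact absurd rfl h
    · intro j' _
      rw [h0, hs j']
      exact hx j'
  · intro i' j
    refine Fin.cases ?_ ?_ j
    · intro _
      rw [h0, hs i', torusDist_comm]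
      exact hx i'
    · intro j' hij
      rw [hs i', hs j']
      exact hY i' j' (fun hh => hij (by rw [hh]))

lemma induction_claim (ε : ℝ) (b : ℝ) (hb0 : 0 ≤ b) (hb1 : b ≤ 1) :
    ∀ n : ℕ, (n : ℝ) * (π * ε ^ 2) ≤ b →
    ENNReal.ofReal (1 - b) ^ n
      ≤ volume {X : Fin n → Torus2 | ∀ i j : Fin n, i ≠ j → ε < torusDist (X i) (X j)} := by
  intro n
  induction n with
  | zero =>
    intro _
    have : {X : Fin 0 → Torus2 | ∀ i j : Fin 0, i ≠ j → ε < torusDist (X i) (X j)}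
        = Set.univ := Set.eq_univ_of_forall (fun X i => i.elim0)
    rw [this, pow_zero, MeasureTheory.volume_pi, Measure.pi_univ]
    simp [volume_torus_univ]
  | succ n ih =>
    intro hn1
    have hεnn : (0:ℝ) ≤ π * ε ^ 2 := by positivity
    have hn : (n : ℝ) * (π * ε ^ 2) ≤ b := by
      refine le_trans ?_ hn1
      have h : ((n:ℝ)) ≤ ((n+1:ℕ):ℝ) := by push_cast; linarith
      nlinarith
    have IH := ih hn
    set c := ENNReal.ofReal (1 - b) with hc
    set A : Set (Fin n → Torus2) :=
      {X | ∀ i j : Fin n, i ≠ j → ε < torusDist (X i) (X j)} with hA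
    have hAmeas : MeasurableSet A := measurable_config n ε
    have hA'meas :
        MeasurableSet {X : Fin (n+1) → Torus2 | ∀ i j : Fin (n+1), i ≠ j → ε < torusDist (X i) (X j)} :=
      measurable_config (n+1) ε
    have hmp := measurePreserving_piFinSuccAbove (fun _ : Fin (n+1) => (volume : Measure Torus2)) 0
    set s' : Set (Torus2 × (Fin n → Torus2)) :=
      (MeasurableEquiv.piFinSuccAbove (fun _ : Fin (n+1) => Torus2) 0).symm ⁻¹'
        {X : Fin (n+1) → Torus2 | ∀ i j : Fin (n+1), i ≠ j → ε < torusDist (X i) (X j)} with hs'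
    have hs'meas : MeasurableSet s' :=
      (MeasurableEquiv.piFinSuccAbove (fun _ : Fin (n+1) => Torus2) 0).symm.measurable hA'meas
    have hkey : (volume : Measure (Fin (n+1) → Torus2))
        {X : Fin (n+1) → Torus2 | ∀ i j : Fin (n+1), i ≠ j → ε < torusDist (X i) (X j)}
        = ((volume : Measure Torus2).prod (Measure.pi fun _ : Fin n => (volume : Measure Torus2))) s' := by
      rw [MeasureTheory.volume_pi]
      exact ((hmp.symm _).measure_preimage hA'meas.nullMeasurableSet).symm
    rw [hkey, Measure.prod_apply_symm hs'meas]
    have hslice : ∀ Y : Fin n → Torus2,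
        A.indicator (fun _ => c) Y ≤ volume ((fun x => (x, Y)) ⁻¹' s') := by
      intro Y
      by_cases hY : Y ∈ A
      · rw [Set.indicator_of_mem hY]
        have hYp : ∀ i j : Fin n, i ≠ j → ε < torusDist (Y i) (Y j) := hY
        set G : Set Torus2 := {x | ∀ i : Fin n, ε < torusDist x (Y i)} with hG
        have hGsub : G ⊆ (fun x => (x, Y)) ⁻¹' s' := by
          intro x hx
          have hx' : ∀ i : Fin n, ε < torusDist x (Y i) := hx
          simp only [Set.mem_preimage, hs', MeasurableEquiv.piFinSuccAbove_symm_apply,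
            Set.mem_setOf_eq]
          exact cons_mem_config x Y hYp hx'
        have hGmeas : MeasurableSet G := by
          have hGi : G = ⋂ i, {x : Torus2 | ε < torusDist x (Y i)} := by
            ext x; simp [hG]
          rw [hGi]
          exact MeasurableSet.iInter fun i =>
            (isOpen_lt continuous_const
              (continuous_torusDist2 continuous_id continuous_const)).measurableSet
        have hcompl : Gᶜ ⊆ ⋃ i : Fin n, {x : Torus2 | torusDist x (Y i) ≤ ε} := by
          intro x hx
          simp only [hG, Set.mem_compl_iff, Set.mem_setOf_eq, not_forall, not_lt] at hx
          obtain ⟨i, hi⟩ := hx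
          exact Set.mem_iUnion.2 ⟨i, hi⟩
        have hcomplvol : volume Gᶜ ≤ ENNReal.ofReal b := by
          calc volume Gᶜ ≤ ∑' i : Fin n, volume {x : Torus2 | torusDist x (Y i) ≤ ε} :=
                le_trans (measure_mono hcompl) (measure_iUnion_le _)
            _ ≤ ∑' _i : Fin n, ENNReal.ofReal (π * ε ^ 2) :=
                ENNReal.tsum_le_tsum fun i => by
                  by_cases h0 : (0:ℝ) ≤ ε
                  · exact volume_torus_ball (Y i) h0
                  · have hemp : {x : Torus2 | torusDist x (Y i) ≤ ε} = ∅ := by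
                      ext x
                      simp only [Set.mem_setOf_eq, Set.mem_empty_iff_false, iff_false, not_le]
                      have hq := Real.sqrt_nonneg
                        (dist x.1 (Y i).1 ^ 2 + dist x.2 (Y i).2 ^ 2)
                      unfold torusDist
                      linarith [lt_of_not_ge h0]
                    simp [hemp]
            _ ≤ ENNReal.ofReal b := by
                rw [tsum_fintype]
                simp only [Finset.sum_const, Finset.card_univ, Fintype.card_fin, nsmul_eq_mul]
                rw [← ENNReal.ofReal_natCast n, ← ENNReal.ofReal_mul (by positivity)]
                exact ENNReal.ofReal_le_ofReal hn
        have huniv : volume G + volume Gᶜ = 1 := by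
          rw [measure_add_measure_compl hGmeas, volume_torus_univ]
        have h1 : c ≤ volume G := by
          have h2 : c = 1 - ENNReal.ofReal b := by
            rw [hc, ← ENNReal.ofReal_one, ENNReal.ofReal_sub _ hb0]
          rw [h2]
          refine le_trans (tsub_le_tsub_left hcomplvol 1) ?_
          rw [tsub_le_iff_right, huniv]
        exact le_trans h1 (measure_mono hGsub)
      · rw [Set.indicator_of_notMem hY]; exact zero_le
    calc c ^ (n+1) = c * c ^ n := by ring
      _ ≤ c * volume A := mul_le_mul_right IH c
      _ = c * (Measure.pi fun _ : Fin n => (volume : Measure Torus2)) A := by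
          rw [← MeasureTheory.volume_pi]
      _ = ∫⁻ Y, A.indicator (fun _ => c) Y ∂(Measure.pi fun _ : Fin n => (volume : Measure Torus2)) := by
          rw [MeasureTheory.lintegral_indicator_const hAmeas]
      _ ≤ ∫⁻ Y, volume ((fun x => (x, Y)) ⁻¹' s') ∂(Measure.pi fun _ : Fin n => (volume : Measure Torus2)) :=
          lintegral_mono hslice

end HardSphereAux

/-- Lower bound for the hard-sphere partition function on `𝕋²`: if
`N π ε² ≤ 1/2` then the Haar measure of the set of `N`-point configurations with pairwise
distances `> ε` is at least `(1 - N π ε²)^N`; in particular, in the Boltzmann–Grad scaling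
`N ε = 1/α` it is at least `exp(-2π/α²)`. -/
theorem hard_sphere_partition_function_lower_bound
    (N : ℕ) (hN : 1 ≤ N) (ε : ℝ) (hε0 : 0 < ε) (hε : ε < 1 / 2)
    (hscale : (N : ℝ) * π * ε ^ 2 ≤ 1 / 2) :
    (ENNReal.ofReal ((1 - (N : ℝ) * π * ε ^ 2) ^ N) ≤
      volume {X : Fin N → Torus2 | ∀ i j : Fin N, i ≠ j → ε < torusDist (X i) (X j)}) ∧
    ∀ α : ℝ, 0 < α → (N : ℝ) * ε = 1 / α →
      ENNReal.ofReal (Real.exp (-2 * π / α ^ 2)) ≤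
        volume {X : Fin N → Torus2 | ∀ i j : Fin N, i ≠ j → ε < torusDist (X i) (X j)} := by
  set b : ℝ := (N : ℝ) * π * ε ^ 2 with hbdef
  have hb0 : 0 ≤ b := by positivity
  have hb1 : b ≤ 1 := le_trans hscale (by norm_num)
  have h1b : (0:ℝ) ≤ 1 - b := by linarith [hscale]
  have hmain := induction_claim ε b hb0 hb1 N (le_of_eq (by rw [hbdef]; ring))
  have part1 : ENNReal.ofReal ((1 - b) ^ N) ≤
      volume {X : Fin N → Torus2 | ∀ i j : Fin N, i ≠ j → ε < torusDist (X i) (X j)} := by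
    rw [ENNReal.ofReal_pow h1b]
    exact hmain
  refine ⟨part1, ?_⟩
  intro α hα hNε
  have hb2 : b ≤ 1/2 := hscale
  -- exp(-2b) ≤ 1 - b
  have hexp : Real.exp (-2 * b) ≤ 1 - b := by
    have ha : (1:ℝ) + 2*b ≤ Real.exp (2*b) := by
      linarith [Real.add_one_le_exp (2*b)]
    have hpos : (0:ℝ) < 1 + 2*b := by linarith
    have hexppos : (0:ℝ) < Real.exp (2*b) := Real.exp_pos _
    calc Real.exp (-2 * b) = (Real.exp (2*b))⁻¹ := by
          rw [← Real.exp_neg]; congr 1; ring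
      _ ≤ (1 + 2*b)⁻¹ := by
          apply inv_anti₀ hpos ha
      _ = 1 / (1 + 2*b) := (one_div _).symm
      _ ≤ 1 - b := by rw [div_le_iff₀ hpos]; nlinarith
  have hval : -2 * π / α ^ 2 = (N : ℝ) * (-2 * b) := by
    have hsq : ((N:ℝ) * ε) ^ 2 = (1/α) ^ 2 := by rw [hNε]
    have hα2 : α ^ 2 ≠ 0 := pow_ne_zero 2 (ne_of_gt hα)
    field_simp [hbdef] at hsq ⊢
    linear_combination π * hsq
  have hkey : Real.exp (-2 * π / α ^ 2) ≤ (1 - b) ^ N := by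
    rw [hval, Real.exp_nat_mul]
    exact pow_le_pow_left₀ (Real.exp_nonneg _) hexp N
  exact le_trans (ENNReal.ofReal_le_ofReal hkey) part1
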